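/- arXiv:2212.07124 — 2 statements merged into one kernel-verified Lean document; each statement's English description precedes it below -/
import Mathlib

section
/- The discrete Fréchet distance between a curve P and its μ-simplification P^μ is at most μ. -/
open scoped BigOperators

namespace Frechet

variable {X : Type*}

/-- A single step of a monotone discrete walk: each coordinate increases by 0 or 1,
and not both stay the same. -/
def IsStep (a b : ℕ × ℕ) : Prop :=
  (b.1 = a.1 ∨ b.1 = a.1 + 1) ∧ (b.2 = a.2 ∨ b.2 = a.2 + 1) ∧ b ≠ a

/-- A monotone discrete walk from (0,0) to (n-1, m-1) in the n × m lattice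
(0-indexed version of a walk from (1,1) to (n,m)). -/
def IsWalk (n m : ℕ) (F : List (ℕ × ℕ)) : Prop :=
  F ≠ [] ∧ F.head? = some (0, 0) ∧ F.getLast? = some (n - 1, m - 1) ∧
    F.Chain' IsStep ∧ ∀ p ∈ F, p.1 < n ∧ p.2 < m

/-- Cost of a walk: the maximum matched distance along it. -/
def walkCost (d : X → X → ℝ) (P Q : ℕ → X) (F : List (ℕ × ℕ)) : ℝ :=
  (F.map fun p => d (P p.1) (Q p.2)).foldr max 0

/-- Discrete Fréchet distance between `P` (first `n` points) and `Q` (first `m` points),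
computed with respect to the distance-like function `d`. -/
noncomputable def dF (d : X → X → ℝ) (P : ℕ → X) (n : ℕ) (Q : ℕ → X) (m : ℕ) : ℝ :=
  sInf {c | ∃ F, IsWalk n m F ∧ walkCost d P Q F = c}

/-- Arc length of the polygonal curve `P` between vertex indices `i` and `j`. -/
def arcLen (d : X → X → ℝ) (P : ℕ → X) (i j : ℕ) : ℝ :=
  ∑ k ∈ Finset.Ico i j, d (P k) (P (k + 1))

/-- `S` is the list of indices of the greedy `μ`-simplification of the curve
`P` with `n` vertices: it starts at vertex `0`, after a vertex `a` the next chosen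
vertex `b` is the first one with arc length `> μ` (unless `b` is the final vertex
`n-1`, which is always appended), and it ends at vertex `n-1`. -/
def IsSimplification (d : X → X → ℝ) (P : ℕ → X) (n : ℕ) (μ : ℝ) (S : List ℕ) : Prop :=
  S.head? = some 0 ∧ S.getLast? = some (n - 1) ∧ S.Pairwise (· < ·) ∧
    (∀ a ∈ S, a < n) ∧
    S.Chain' (fun a b =>
      (∀ j, a < j → j < b → arcLen d P a j ≤ μ) ∧ (b = n - 1 ∨ μ < arcLen d P a b))

/-- The subsequence of `P` selected by the index list `S`, as a curve. -/
def subCurve (P : ℕ → X) (S : List ℕ) : ℕ → X :=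
  fun t => P (S.getD t 0)

/-- Discrete c-packedness of the polygonal curve `P` (first `n` vertices): for every
ball, the total length of the edges of `P` contained in the ball is at most `c`
times the radius. -/
def CPacked (d : X → X → ℝ) (P : ℕ → X) (n : ℕ) (c : ℝ) : Prop :=
  ∀ (x : X) (r : ℝ), 0 ≤ r →
    ∑ k ∈ Finset.range (n - 1),
      (if d (P k) x ≤ r ∧ d (P (k + 1)) x ≤ r then d (P k) (P (k + 1)) else 0) ≤ c * r

/-- Directed discrete Hausdorff distance from `P` (first `n` points) to `Q`
(first `m` points). -/
noncomputable def dirHaus (d : X → X → ℝ) (P : ℕ → X) (n : ℕ) (Q : ℕ → X) (m : ℕ) : ℝ :=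
  sSup {r | ∃ i < n, r = sInf {s | ∃ j < m, s = d (P i) (Q j)}}

/-- Discrete (symmetric) Hausdorff distance. -/
noncomputable def dHaus (d : X → X → ℝ) (P : ℕ → X) (n : ℕ) (Q : ℕ → X) (m : ℕ) : ℝ :=
  max (dirHaus d P n Q m) (dirHaus d Q m P n)


/-- Index of the last simplification vertex `≤ i`. -/
def tIdx (S : List ℕ) : ℕ → ℕ
  | 0 => 0
  | (i+1) => if (i+1) ∈ S then tIdx S i + 1 else tIdx S i

lemma tIdx_succ (S : List ℕ) (i : ℕ) :
    tIdx S (i+1) = if (i+1) ∈ S then tIdx S i + 1 else tIdx S i := rfl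

lemma tIdx_step (S : List ℕ) (i : ℕ) :
    tIdx S (i+1) = tIdx S i ∨ tIdx S (i+1) = tIdx S i + 1 := by
  rw [tIdx_succ]; split <;> simp

lemma getD_mem {S : List ℕ} {k : ℕ} (h : k < S.length) : S.getD k 0 ∈ S := by
  rw [List.getD_eq_getElem S 0 h]; exact List.getElem_mem h

lemma getD_lt {S : List ℕ} (hs : S.Pairwise (· < ·)) {k l : ℕ} (hkl : k < l)
    (hl : l < S.length) : S.getD k 0 < S.getD l 0 := by
  rw [List.getD_eq_getElem S 0 hl, List.getD_eq_getElem S 0 (hkl.trans hl)]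
  exact hs.sortedLT.strictMono_get (a := ⟨k, hkl.trans hl⟩) (b := ⟨l, hl⟩) hkl

lemma getD_le {S : List ℕ} (hs : S.Pairwise (· < ·)) {k l : ℕ} (hkl : k ≤ l)
    (hl : l < S.length) : S.getD k 0 ≤ S.getD l 0 := by
  rcases hkl.lt_or_eq with h | h
  · exact (getD_lt hs h hl).le
  · subst h; rfl

lemma tIdx_invariant (S : List ℕ) (hs : S.Pairwise (· < ·)) (h0 : S.getD 0 0 = 0)
    (hL : 0 < S.length) (i : ℕ) :
    tIdx S i < S.length ∧ S.getD (tIdx S i) 0 ≤ i ∧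
      (tIdx S i + 1 < S.length → i < S.getD (tIdx S i + 1) 0) := by
  induction i with
  | zero =>
    refine ⟨hL, le_of_eq (by simpa [tIdx] using h0), fun h => ?_⟩
    have h' : (1:ℕ) < S.length := by simpa [tIdx] using h
    have h2 := getD_lt hs Nat.zero_lt_one h'
    show 0 < S.getD 1 0
    omega
  | succ i ih =>
    obtain ⟨h1, h2, h3⟩ := ih
    by_cases hmem : (i+1) ∈ S
    · obtain ⟨k, hk, hks⟩ : ∃ k, ∃ hk : k < S.length, S[k] = i + 1 := by
        simpa [List.mem_iff_getElem] using hmem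
      have hkD : S.getD k 0 = i + 1 := by rw [List.getD_eq_getElem S 0 hk]; exact hks
      have htk : tIdx S i < k := by
        by_contra hc
        have := getD_le hs (Nat.le_of_not_lt hc) h1
        omega
      have ht1 : tIdx S i + 1 < S.length := Nat.lt_of_le_of_lt htk hk
      have hb : S.getD (tIdx S i + 1) 0 = i + 1 := by
        have hle : S.getD (tIdx S i + 1) 0 ≤ i + 1 := hkD ▸ getD_le hs htk hk
        have := h3 ht1
        omega
      have hT : tIdx S (i+1) = tIdx S i + 1 := by rw [tIdx_succ]; simp [hmem]
      refine ⟨hT ▸ ht1, by rw [hT, hb], fun h => ?_⟩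
      rw [hT] at h ⊢
      have := getD_lt hs (by omega : tIdx S i + 1 < tIdx S i + 1 + 1) h
      omega
    · have hT : tIdx S (i+1) = tIdx S i := by rw [tIdx_succ]; simp [hmem]
      refine ⟨hT ▸ h1, by rw [hT]; omega, fun h => ?_⟩
      rw [hT] at h ⊢
      have hgt := h3 h
      have hne : S.getD (tIdx S i + 1) 0 ≠ i + 1 := fun hc => hmem (hc ▸ getD_mem h)
      omega

lemma dist_le_arcLen {X : Type*} [MetricSpace X] (P : ℕ → X) {a j : ℕ} (h : a ≤ j) :
    dist (P a) (P j) ≤ arcLen dist P a j := by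
  induction j, h using Nat.le_induction with
  | base => simp [arcLen]
  | succ j hj ih =>
    have harc : arcLen dist P a (j+1) = arcLen dist P a j + dist (P j) (P (j+1)) := by
      unfold arcLen; rw [Finset.sum_Ico_succ_top hj]
    rw [harc]
    calc dist (P a) (P (j+1)) ≤ dist (P a) (P j) + dist (P j) (P (j+1)) :=
          dist_triangle _ _ _
      _ ≤ _ := by linarith

lemma foldr_max_nonneg (l : List ℝ) : 0 ≤ l.foldr max 0 := by
  induction l with
  | nil => simp
  | cons a t ih => exact le_trans ih (le_max_right _ _)

lemma foldr_max_le {l : List ℝ} {μ : ℝ} (hμ : 0 ≤ μ) (h : ∀ x ∈ l, x ≤ μ) :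
    l.foldr max 0 ≤ μ := by
  induction l with
  | nil => simpa
  | cons a t ih =>
    simp only [List.foldr_cons]
    exact max_le (h a (by simp)) (ih fun x hx => h x (List.mem_cons_of_mem _ hx))

/-- the discrete Fréchet distance between a curve and its greedy
`μ`-simplification is at most `μ`. -/
theorem dF_simplification_le {X : Type*} [MetricSpace X]
    (P : ℕ → X) (n : ℕ) (hn : 0 < n) (μ : ℝ) (hμ : 0 ≤ μ)
    (S : List ℕ) (hS : IsSimplification dist P n μ S) :
    dF dist P n (subCurve P S) S.length ≤ μ := by
  obtain ⟨hhead, hlast, hsort, hbound, hchain⟩ := hS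
  have hSne : S ≠ [] := by intro h; rw [h] at hhead; simp at hhead
  have hL : 0 < S.length := List.length_pos_iff.mpr hSne
  have h0 : S.getD 0 0 = 0 := by
    cases S with
    | nil => simp at hhead
    | cons a t => simp only [List.head?_cons, Option.some.injEq] at hhead; simp [hhead]
  have hlastD : S.getD (S.length - 1) 0 = n - 1 := by
    rw [List.getLast?_eq_getElem?, List.getElem?_eq_getElem (by omega)] at hlast
    rw [List.getD_eq_getElem S 0 (by omega)]
    exact Option.some_injective _ hlast
  have inv := tIdx_invariant S hsort h0 hL
  -- top index
  have htop : tIdx S (n-1) = S.length - 1 := by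
    obtain ⟨h1, h2, h3⟩ := inv (n-1)
    by_contra hc
    have ht1 : tIdx S (n-1) + 1 < S.length := by omega
    have := h3 ht1
    have hmem := getD_mem ht1
    have := hbound _ hmem
    omega
  -- key distance bound
  have key : ∀ i, i < n → dist (P i) (P (S.getD (tIdx S i) 0)) ≤ μ := by
    intro i hi
    obtain ⟨h1, h2, h3⟩ := inv i
    rcases eq_or_lt_of_le h2 with heq | hlt
    · rw [heq]; simpa using hμ
    · have ht1 : tIdx S i + 1 < S.length := by
        by_contra hc
        have he : tIdx S i = S.length - 1 := by omega
        rw [he, hlastD] at hlt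
        omega
      have hb := h3 ht1
      have hch := List.isChain_iff_getElem.mp hchain (tIdx S i) (by omega)
      rw [← List.getD_eq_getElem S 0 (by omega : tIdx S i < S.length),
        ← List.getD_eq_getElem S 0 ht1] at hch
      have harc : arcLen dist P (S.getD (tIdx S i) 0) i ≤ μ := hch.1 i hlt hb
      calc dist (P i) (P (S.getD (tIdx S i) 0))
          = dist (P (S.getD (tIdx S i) 0)) (P i) := dist_comm _ _
        _ ≤ arcLen dist P (S.getD (tIdx S i) 0) i := dist_le_arcLen P hlt.le
        _ ≤ μ := harc
  -- the walk
  set F : List (ℕ × ℕ) := (List.range n).map (fun i => (i, tIdx S i)) with hF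
  have hFlen : F.length = n := by simp [hF]
  have hFget : ∀ k (hk : k < F.length), F.get ⟨k, hk⟩ = (k, tIdx S k) := by
    intro k hk
    simp [hF]
  have hwalk : IsWalk n S.length F := by
    refine ⟨?_, ?_, ?_, ?_, ?_⟩
    · intro h; rw [h] at hFlen; simp at hFlen; omega
    · rw [List.head?_eq_getElem?]
      rw [List.getElem?_eq_getElem (by omega)]
      have : F[0] = F.get ⟨0, by omega⟩ := rfl
      rw [this, hFget 0 (by omega)]
      simp [tIdx]
    · rw [List.getLast?_eq_getElem?]
      rw [List.getElem?_eq_getElem (by rw [hFlen]; omega)]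
      have : F[F.length - 1] = F.get ⟨F.length - 1, by omega⟩ := rfl
      rw [this]
      have h1 : F.length - 1 = n - 1 := by omega
      have := hFget (F.length - 1) (by omega)
      rw [this, h1, htop]
    · show F.IsChain IsStep; rw [List.isChain_iff_getElem]
      intro k hk
      rw [show F[k] = F.get ⟨k, by omega⟩ from rfl, show F[k+1] = F.get ⟨k+1, by omega⟩ from rfl, hFget k (by omega), hFget (k+1) (by omega)]
      refine ⟨Or.inr rfl, ?_, ?_⟩
      · exact tIdx_step S k
      · intro hc
        have := congrArg Prod.fst hc
        simp at this
    · intro p hp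
      rw [hF, List.mem_map] at hp
      obtain ⟨i, hi, hpi⟩ := hp
      rw [List.mem_range] at hi
      rw [← hpi]
      exact ⟨hi, (inv i).1⟩
  have hcost : walkCost dist P (subCurve P S) F ≤ μ := by
    apply foldr_max_le hμ
    intro x hx
    rw [List.mem_map] at hx
    obtain ⟨p, hp, hpx⟩ := hx
    rw [hF, List.mem_map] at hp
    obtain ⟨i, hi, hpi⟩ := hp
    rw [List.mem_range] at hi
    rw [← hpx, ← hpi]
    exact key i hi
  have hmem : walkCost dist P (subCurve P S) F ∈
      {c | ∃ F', IsWalk n S.length F' ∧ walkCost dist P (subCurve P S) F' = c} :=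
    ⟨F, hwalk, rfl⟩
  have hbdd : BddBelow {c | ∃ F', IsWalk n S.length F' ∧
      walkCost dist P (subCurve P S) F' = c} := by
    refine ⟨0, fun c hc => ?_⟩
    obtain ⟨F', _, hF'⟩ := hc
    rw [← hF']
    exact foldr_max_nonneg _
  exact le_trans (csInf_le hbdd hmem) hcost


end Frechet
end

section
/- Any κ-straight curve is 8κ-packed: if P satisfies ℓ(P[i,j]) ≤ κ·d(p_i, p_j) for all vertex indices i < j, then for every ball B of radius r, ℓ(P ∩ B) ≤ 8κ·r, where P ∩ B denotes the maximal subcurves of P contained in B. -/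
open scoped BigOperators

namespace Frechet

variable {X : Type*}

/-- every `κ`-straight curve is `8κ`-packed: if the arc length between
any two vertices is at most `κ` times their distance, then for every ball of radius
`r` the length of `P` inside the ball is at most `8κ·r`. -/
theorem straight_implies_packed {X : Type*} [MetricSpace X]
    (P : ℕ → X) (n : ℕ) (κ : ℝ) (hκ : 0 ≤ κ)
    (hstraight : ∀ i j, i ≤ j → j < n → arcLen dist P i j ≤ κ * dist (P i) (P j)) :
    CPacked dist P n (8 * κ) := by
  intro x r hr
  classical
  set S := (Finset.range (n - 1)).filter
    (fun k => dist (P k) x ≤ r ∧ dist (P (k + 1)) x ≤ r) with hS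
  have hsum : ∑ k ∈ Finset.range (n - 1),
      (if dist (P k) x ≤ r ∧ dist (P (k + 1)) x ≤ r then dist (P k) (P (k + 1)) else 0)
      = ∑ k ∈ S, dist (P k) (P (k + 1)) := (Finset.sum_filter _ _).symm
  rw [hsum]
  rcases eq_or_ne S ∅ with h | h
  · rw [h, Finset.sum_empty]
    positivity
  · have hne : S.Nonempty := Finset.nonempty_iff_ne_empty.mpr h
    set i := S.min' hne
    set j := S.max' hne
    have hiS : i ∈ S := S.min'_mem hne
    have hjS : j ∈ S := S.max'_mem hne
    have hjr : j < n - 1 := Finset.mem_range.mp (Finset.mem_filter.mp hjS).1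
    have hsub : S ⊆ Finset.Ico i (j + 1) := by
      intro k hk
      exact Finset.mem_Ico.mpr ⟨S.min'_le k hk, Nat.lt_succ_of_le (S.le_max' k hk)⟩
    have h1 : ∑ k ∈ S, dist (P k) (P (k + 1))
        ≤ ∑ k ∈ Finset.Ico i (j + 1), dist (P k) (P (k + 1)) := by
      apply Finset.sum_le_sum_of_subset_of_nonneg hsub
      intro k _ _; exact dist_nonneg
    have h2 : arcLen dist P i (j + 1) ≤ κ * dist (P i) (P (j + 1)) := by
      apply hstraight
      · exact Nat.le_succ_of_le (S.min'_le j hjS)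
      · omega
    have hi' := (Finset.mem_filter.mp hiS).2
    have hj' := (Finset.mem_filter.mp hjS).2
    have h3 : dist (P i) (P (j + 1)) ≤ 2 * r := by
      calc dist (P i) (P (j + 1)) ≤ dist (P i) x + dist x (P (j + 1)) := dist_triangle _ _ _
        _ ≤ r + r := add_le_add hi'.1 (by rw [dist_comm]; exact hj'.2)
        _ = 2 * r := by ring
    have hκr : 0 ≤ κ * r := mul_nonneg hκ hr
    calc ∑ k ∈ S, dist (P k) (P (k + 1))
        ≤ arcLen dist P i (j + 1) := h1
      _ ≤ κ * dist (P i) (P (j + 1)) := h2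
      _ ≤ κ * (2 * r) := mul_le_mul_of_nonneg_left h3 hκ
      _ ≤ 8 * κ * r := by nlinarith

end Frechet
end
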